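/- arXiv:1306.6822 — 5 statements merged into one kernel-verified Lean document; each statement's English description precedes it below -/
import Mathlib

section
/- The set G of homeomorphisms f of ℝ such that f − id and f⁻¹ − id belong to W^{1,∞}(ℝ) and f_ξ − 1 belongs to L²(ℝ) is a group under composition. -/
open MeasureTheory

/-- Membership in the relabeling group `G`: `f - id` and `f⁻¹ - id` belong to
`W^{1,∞}` (bounded and Lipschitz, hence with bounded weak derivative), and
`f_ξ - 1 ∈ L²`. -/
def InRelabelingGroup (f : Homeomorph ℝ ℝ) : Prop :=
  (∃ C : ℝ, ∀ x, |f x - x| ≤ C) ∧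
  (∃ L : NNReal, LipschitzWith L (fun x => f x - x)) ∧
  (∃ C : ℝ, ∀ x, |f.symm x - x| ≤ C) ∧
  (∃ L : NNReal, LipschitzWith L (fun x => f.symm x - x)) ∧
  MemLp (fun x => deriv f x - 1) 2 (volume : Measure ℝ) ∧
  MemLp (fun x => deriv f.symm x - 1) 2 (volume : Measure ℝ)

open Set in
/-- A Lipschitz map of the real line maps null sets to null sets. -/
lemma lipschitz_image_null {K : NNReal} {φ : ℝ → ℝ} (h : LipschitzWith K φ)
    {s : Set ℝ} (hs : volume s = 0) : volume (φ '' s) = 0 := by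
  rw [← MeasureTheory.hausdorffMeasure_real] at hs ⊢
  have h2 := h.hausdorffMeasure_image_le zero_le_one s
  rw [hs, mul_zero] at h2
  exact le_antisymm h2 zero_le

/-- If `f - id` is Lipschitz with constant `L`, then `f` is Lipschitz with constant `L+1`. -/
lemma lip_self {f : ℝ → ℝ} {L : NNReal} (h : LipschitzWith L (fun x => f x - x)) :
    LipschitzWith (L + 1) f := by
  have hf : f = fun x => (f x - x) + x := by funext x; ring
  rw [hf]
  exact h.add LipschitzWith.id

open Set in
/-- Composition with `f` preserves `L²` membership when `f⁻¹ - id` is Lipschitz. -/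
lemma memLp_comp {f : Homeomorph ℝ ℝ} {L : NNReal}
    (hL : LipschitzWith L (fun x => f.symm x - x))
    {h : ℝ → ℝ} (hmeas : Measurable h) (hh : MemLp h 2 (volume : Measure ℝ)) :
    MemLp (fun x => h (f x)) 2 (volume : Measure ℝ) := by
  set K : NNReal := L + 1 with hK
  have hφ : LipschitzWith K (⇑f.symm) := lip_self hL
  set s : Set ℝ := {x | DifferentiableAt ℝ (⇑f.symm) x} with hs_def
  have hs : MeasurableSet s := measurableSet_of_differentiableAt ℝ _
  have hsc : volume sᶜ = 0 := by
    have h1 := hφ.ae_differentiableAt (μ := (volume : Measure ℝ))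
    rw [ae_iff] at h1
    simpa [hs_def, Set.compl_setOf] using h1
  have hderiv : ∀ x ∈ s, HasDerivWithinAt (⇑f.symm) (deriv (⇑f.symm) x) s x :=
    fun x hx => hx.hasDerivAt.hasDerivWithinAt
  have hinj : InjOn (⇑f.symm) s := f.symm.injective.injOn
  have hmc : Measurable fun x => h (f x) := hmeas.comp f.continuous.measurable
  rw [memLp_two_iff_integrable_sq hmc.aestronglyMeasurable]
  rw [memLp_two_iff_integrable_sq hmeas.aestronglyMeasurable] at hh
  have key : IntegrableOn (fun y => (h (f y)) ^ 2) (⇑f.symm '' s) volume := by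
    rw [integrableOn_image_iff_integrableOn_abs_deriv_smul hs hderiv hinj]
    apply Integrable.integrableOn
    have hb : ∀ x, ‖|deriv (⇑f.symm) x| • (h (f (f.symm x))) ^ 2‖ ≤ (K : ℝ) * ((h x) ^ 2) := by
      intro x
      rw [f.apply_symm_apply x]
      have h2 : |deriv (⇑f.symm) x| ≤ (K : ℝ) := by
        simpa [Real.norm_eq_abs] using norm_deriv_le_of_lipschitz (𝕜 := ℝ) (x₀ := x) hφ
      calc ‖|deriv (⇑f.symm) x| • (h x) ^ 2‖
          = |deriv (⇑f.symm) x| * (h x) ^ 2 := by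
            rw [smul_eq_mul, Real.norm_eq_abs, abs_mul, abs_abs, abs_of_nonneg (sq_nonneg (h x))]
        _ ≤ (K : ℝ) * (h x) ^ 2 := mul_le_mul_of_nonneg_right h2 (sq_nonneg _)
    refine Integrable.mono' (hh.const_mul (K : ℝ)) ?_ (Filter.Eventually.of_forall hb)
    exact ((measurable_deriv (⇑f.symm)).abs.smul
      ((hmeas.comp (f.continuous.measurable.comp f.symm.continuous.measurable)).pow_const 2)).aestronglyMeasurable
  have himg : volume ((⇑f.symm '' s)ᶜ) = 0 := by
    have hsub : (⇑f.symm '' s)ᶜ ⊆ ⇑f.symm '' sᶜ := by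
      intro y hy
      exact ⟨f y, fun hmem => hy ⟨f y, hmem, f.symm_apply_apply y⟩, f.symm_apply_apply y⟩
    exact measure_mono_null hsub (lipschitz_image_null hφ hsc)
  have hnull : IntegrableOn (fun y => (h (f y)) ^ 2) ((⇑f.symm '' s)ᶜ) volume := by
    unfold IntegrableOn
    rw [Measure.restrict_eq_zero.mpr himg]
    exact integrable_zero_measure
  have : IntegrableOn (fun y => (h (f y)) ^ 2) Set.univ volume := by
    rw [← Set.union_compl_self (⇑f.symm '' s)]
    exact key.union hnull
  rwa [integrableOn_univ] at this

/-- `L²` part of closure under composition. -/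
lemma memLp_deriv_comp (f g : Homeomorph ℝ ℝ) {Lf Lg Ls : NNReal}
    (hLf : LipschitzWith Lf (fun x => f x - x))
    (hLg : LipschitzWith Lg (fun x => g x - x))
    (hLs : LipschitzWith Ls (fun x => f.symm x - x))
    (hMf : MemLp (fun x => deriv f x - 1) 2 (volume : Measure ℝ))
    (hMg : MemLp (fun x => deriv g x - 1) 2 (volume : Measure ℝ)) :
    MemLp (fun x => deriv (⇑(f.trans g)) x - 1) 2 (volume : Measure ℝ) := by
  have hf : LipschitzWith (Lf + 1) ⇑f := lip_self hLf
  have hg : LipschitzWith (Lg + 1) ⇑g := lip_self hLg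
  have hfs : LipschitzWith (Ls + 1) ⇑f.symm := lip_self hLs
  have hae_f : ∀ᵐ x ∂(volume : Measure ℝ), DifferentiableAt ℝ (⇑f) x :=
    hf.ae_differentiableAt
  have hg_null : volume {x | ¬ DifferentiableAt ℝ (⇑g) x} = 0 := by
    have h1 := hg.ae_differentiableAt (μ := (volume : Measure ℝ))
    rwa [ae_iff] at h1
  have hae_gf : ∀ᵐ x ∂(volume : Measure ℝ), DifferentiableAt ℝ (⇑g) (f x) := by
    rw [ae_iff]
    refine measure_mono_null ?_ (lipschitz_image_null hfs hg_null)
    intro x hx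
    exact ⟨f x, hx, f.symm_apply_apply x⟩
  have hcoe : ⇑(f.trans g) = ⇑g ∘ ⇑f := rfl
  have key : ∀ᵐ x ∂(volume : Measure ℝ),
      (deriv (⇑g) (f x) - 1) * deriv (⇑f) x + (deriv (⇑f) x - 1)
        = deriv (⇑(f.trans g)) x - 1 := by
    filter_upwards [hae_f, hae_gf] with x hx1 hx2
    have hchain : HasDerivAt (⇑(f.trans g)) (deriv (⇑g) (f x) * deriv (⇑f) x) x := by
      rw [hcoe]
      exact hx2.hasDerivAt.comp x hx1.hasDerivAt
    rw [hchain.deriv]; ring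
  have h1 : MemLp (fun x => deriv (⇑g) (f x) - 1) 2 (volume : Measure ℝ) :=
    memLp_comp hLs ((measurable_deriv _).sub measurable_const) hMg
  have h2 : MemLp (fun x => (deriv (⇑g) (f x) - 1) * deriv (⇑f) x) 2 (volume : Measure ℝ) := by
    refine MemLp.of_le_mul (c := ((Lf : ℝ) + 1)) h1 ?_
      (Filter.Eventually.of_forall fun x => ?_)
    · exact ((((measurable_deriv _).comp f.continuous.measurable).sub
        measurable_const).mul (measurable_deriv _)).aestronglyMeasurable
    · calc ‖(deriv (⇑g) (f x) - 1) * deriv (⇑f) x‖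
          = ‖deriv (⇑f) x‖ * ‖deriv (⇑g) (f x) - 1‖ := by rw [norm_mul, mul_comm]
        _ ≤ ((Lf : ℝ) + 1) * ‖deriv (⇑g) (f x) - 1‖ := by
            refine mul_le_mul_of_nonneg_right ?_ (norm_nonneg _)
            simpa using norm_deriv_le_of_lipschitz (𝕜 := ℝ) (x₀ := x) hf
  exact MemLp.ae_eq key (h2.add hMf)

/-- The set `G` of such homeomorphisms is a group under composition: it contains
the identity and is closed under composition and inversion. -/
theorem relabelingGroup_is_group :
    InRelabelingGroup (Homeomorph.refl ℝ) ∧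
    (∀ f g : Homeomorph ℝ ℝ, InRelabelingGroup f → InRelabelingGroup g →
      InRelabelingGroup (f.trans g)) ∧
    (∀ f : Homeomorph ℝ ℝ, InRelabelingGroup f → InRelabelingGroup f.symm) := by
  refine ⟨?_, ?_, ?_⟩
  · -- identity
    have hid : ⇑(Homeomorph.refl ℝ) = id := rfl
    have hids : ⇑(Homeomorph.refl ℝ).symm = id := rfl
    have hzero : (fun x : ℝ => (Homeomorph.refl ℝ) x - x) = fun _ => (0 : ℝ) := by
      funext x; simp [hid]
    have hd : (fun x : ℝ => deriv (⇑(Homeomorph.refl ℝ)) x - 1) = fun _ => (0 : ℝ) := by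
      funext x; rw [hid]; simp
    refine ⟨⟨0, fun x => by simp [hid]⟩, ⟨0, ?_⟩, ⟨0, fun x => by simp [hids]⟩, ⟨0, ?_⟩, ?_, ?_⟩
    · rw [hzero]; exact LipschitzWith.const 0
    · rw [show (fun x : ℝ => (Homeomorph.refl ℝ).symm x - x) = fun _ => (0 : ℝ) from
        by funext x; simp [hids]]
      exact LipschitzWith.const 0
    · rw [hd]; exact MemLp.zero'
    · rw [show (fun x : ℝ => deriv (⇑(Homeomorph.refl ℝ).symm) x - 1) = fun _ => (0 : ℝ) from
        by funext x; rw [hids]; simp]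
      exact MemLp.zero'
  · -- composition
    rintro f g ⟨⟨Cf, hCf⟩, ⟨Lf, hLf⟩, ⟨Cfs, hCfs⟩, ⟨Lfs, hLfs⟩, hMf, hMfs⟩
      ⟨⟨Cg, hCg⟩, ⟨Lg, hLg⟩, ⟨Cgs, hCgs⟩, ⟨Lgs, hLgs⟩, hMg, hMgs⟩
    have hsymm : (f.trans g).symm = g.symm.trans f.symm := rfl
    refine ⟨⟨Cg + Cf, fun x => ?_⟩, ⟨Lg * (Lf + 1) + Lf, ?_⟩,
      ⟨Cfs + Cgs, fun x => ?_⟩, ⟨Lfs * (Lgs + 1) + Lgs, ?_⟩, ?_, ?_⟩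
    · have : (f.trans g) x - x = (g (f x) - f x) + (f x - x) := by
        simp [Homeomorph.trans_apply]
      rw [this]
      exact (abs_add_le _ _).trans (add_le_add (hCg _) (hCf _))
    · have : (fun x => (f.trans g) x - x)
          = ((fun y => g y - y) ∘ ⇑f) + fun x => f x - x := by
        funext x; simp [Homeomorph.trans_apply, Function.comp]
      rw [this]
      exact (hLg.comp (lip_self hLf)).add hLf
    · have : (f.trans g).symm x - x = (f.symm (g.symm x) - g.symm x) + (g.symm x - x) := by
        rw [hsymm]; simp [Homeomorph.trans_apply]
      rw [this]
      exact (abs_add_le _ _).trans (add_le_add (hCfs _) (hCgs _))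
    · have : (fun x => (f.trans g).symm x - x)
          = ((fun y => f.symm y - y) ∘ ⇑g.symm) + fun x => g.symm x - x := by
        funext x; rw [hsymm]; simp [Homeomorph.trans_apply, Function.comp]
      rw [this]
      exact (hLfs.comp (lip_self hLgs)).add hLgs
    · exact memLp_deriv_comp f g hLf hLg hLfs hMf hMg
    · rw [hsymm]
      have hfss : (fun x => g.symm.symm x - x) = fun x => g x - x := by
        funext x; rw [Homeomorph.symm_symm]
      exact memLp_deriv_comp g.symm f.symm hLgs hLfs (hfss ▸ hLg) hMgs hMfs
  · -- inversion
    rintro f ⟨h1, h2, h3, h4, h5, h6⟩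
    refine ⟨h3, h4, ?_, ?_, h6, ?_⟩
    · rw [Homeomorph.symm_symm]; exact h1
    · rw [Homeomorph.symm_symm]; exact h2
    · rw [Homeomorph.symm_symm]; exact h5
end

section
/- Suppose (y, U, H, r) satisfies y nondecreasing, U Lipschitz, and the identity y_ξ H_ξ = y_ξ² U² + U_ξ² + r² almost everywhere. If ξ₁ < ξ₂ and y(ξ₁) = y(ξ₂), then U(ξ₁) = U(ξ₂). -/
open MeasureTheory Filter Topology

private lemma tendsto_quot {f : ℝ → ℝ} {x d : ℝ} (h : HasDerivAt f d x) :
    Tendsto (fun n : ℕ => ((n:ℝ)+1) * (f (x + 1/((n:ℝ)+1)) - f x)) atTop (𝓝 d) := by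
  have hseq' : Tendsto (fun n : ℕ => x + 1/((n:ℝ)+1)) atTop (𝓝[≠] x) := by
    apply tendsto_nhdsWithin_of_tendsto_nhds_of_eventually_within
    · simpa using tendsto_const_nhds.add (tendsto_one_div_add_atTop_nhds_zero_nat (𝕜 := ℝ))
    · filter_upwards with n
      simp only [Set.mem_compl_iff, Set.mem_singleton_iff, add_eq_left]
      positivity
  have hslope := (hasDerivAt_iff_tendsto_slope.1 h).comp hseq'
  have heq : (fun n : ℕ => slope f x (x + 1/((n:ℝ)+1)))
      = fun n : ℕ => ((n:ℝ)+1) * (f (x + 1/((n:ℝ)+1)) - f x) := by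
    funext n
    rw [slope_def_field]
    have hne : ((n:ℝ)+1) ≠ 0 := by positivity
    field_simp
    ring
  rw [← heq]
  exact hslope

private lemma lipschitz_eq_of_deriv_ae_zero {f : ℝ → ℝ} {L : NNReal} (hf : LipschitzWith L f)
    {a b : ℝ} (hab : a ≤ b)
    (hd : ∀ᵐ x, x ∈ Set.Ioo a b → deriv f x = 0) : f b = f a := by
  have hcont : Continuous f := hf.continuous
  set g : ℕ → ℝ → ℝ := fun n x => ((n:ℝ) + 1) * (f (x + 1 / ((n:ℝ) + 1)) - f x) with hg
  have hbound : ∀ n x, |g n x| ≤ (L : ℝ) := by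
    intro n x
    have hpos : (0:ℝ) < ((n:ℝ) + 1) := by positivity
    have h1 : |f (x + 1 / ((n:ℝ) + 1)) - f x| ≤ (L:ℝ) * (1 / ((n:ℝ)+1)) := by
      have := hf.dist_le_mul (x + 1 / ((n:ℝ) + 1)) x
      rw [Real.dist_eq, Real.dist_eq] at this
      have e : x + 1 / ((n:ℝ) + 1) - x = 1 / ((n:ℝ)+1) := by ring
      rw [e, show |1 / ((n:ℝ)+1)| = 1 / ((n:ℝ)+1) from abs_of_pos (by positivity)] at this
      exact this
    have : |g n x| ≤ ((n:ℝ)+1) * ((L:ℝ) * (1/((n:ℝ)+1))) := by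
      rw [hg]; simp only [abs_mul, abs_of_pos hpos]
      exact mul_le_mul_of_nonneg_left h1 hpos.le
    calc |g n x| ≤ ((n:ℝ)+1) * ((L:ℝ) * (1/((n:ℝ)+1))) := this
      _ = (L:ℝ) := by field_simp
  have hii : ∀ (c d : ℝ), IntervalIntegrable f volume c d := fun c d =>
    hcont.intervalIntegrable c d
  have hint : ∀ n : ℕ, (∫ x in a..b, g n x) =
      ((n:ℝ) + 1) * ((∫ x in b..(b + 1/((n:ℝ)+1)), f x) - ∫ x in a..(a + 1/((n:ℝ)+1)), f x) := by
    intro n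
    have h1 : (∫ x in a..b, f (x + 1/((n:ℝ)+1))) = ∫ x in (a + 1/((n:ℝ)+1))..(b + 1/((n:ℝ)+1)), f x :=
      intervalIntegral.integral_comp_add_right f _
    have hiic : IntervalIntegrable (fun x => f (x + 1/((n:ℝ)+1))) volume a b :=
      (hcont.comp (continuous_add_right _)).intervalIntegrable a b
    have : (∫ x in a..b, g n x) = ((n:ℝ)+1) * ∫ x in a..b, (f (x + 1/((n:ℝ)+1)) - f x) := by
      rw [hg]; exact intervalIntegral.integral_const_mul _ _
    rw [this, intervalIntegral.integral_sub hiic (hii a b), h1]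
    have e1 : (∫ x in (a + 1/((n:ℝ)+1))..(b + 1/((n:ℝ)+1)), f x)
        = (∫ x in (a + 1/((n:ℝ)+1))..b, f x) + ∫ x in b..(b + 1/((n:ℝ)+1)), f x :=
      (intervalIntegral.integral_add_adjacent_intervals (hii _ _) (hii _ _)).symm
    have e2 : (∫ x in a..b, f x)
        = (∫ x in a..(a + 1/((n:ℝ)+1)), f x) + ∫ x in (a + 1/((n:ℝ)+1))..b, f x :=
      (intervalIntegral.integral_add_adjacent_intervals (hii _ _) (hii _ _)).symm
    rw [e1, e2]; ring
  -- the integrals tend to f b - f a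
  have hlim : ∀ c : ℝ, Tendsto (fun n : ℕ => ((n:ℝ)+1) * ∫ x in c..(c + 1/((n:ℝ)+1)), f x)
      atTop (𝓝 (f c)) := by
    intro c
    have hF : HasDerivAt (fun t => ∫ x in c..t, f x) (f c) c :=
      intervalIntegral.integral_hasDerivAt_right (hii c c)
        (hcont.stronglyMeasurableAtFilter _ _) hcont.continuousAt
    have := tendsto_quot hF
    simpa [intervalIntegral.integral_same] using this
  have hlim1 : Tendsto (fun n : ℕ => ∫ x in a..b, g n x) atTop (𝓝 (f b - f a)) := by
    have : Tendsto (fun n : ℕ =>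
        ((n:ℝ)+1) * ((∫ x in b..(b + 1/((n:ℝ)+1)), f x) - ∫ x in a..(a + 1/((n:ℝ)+1)), f x))
        atTop (𝓝 (f b - f a)) := by
      have := (hlim b).sub (hlim a)
      simpa [mul_sub] using this
    simpa only [← hint] using this
  -- dominated convergence: the integrals tend to 0
  have hlim2 : Tendsto (fun n : ℕ => ∫ x in a..b, g n x) atTop (𝓝 0) := by
    have heq : ∀ n : ℕ, (∫ x in a..b, g n x) = ∫ x in Set.Ioc a b, g n x := fun n =>
      intervalIntegral.integral_of_le hab
    simp only [heq]
    have h0 : (0:ℝ) = ∫ _x in Set.Ioc a b, (0:ℝ) := by simp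
    rw [h0]
    apply MeasureTheory.tendsto_integral_of_dominated_convergence (fun _ => (L:ℝ))
    · intro n
      exact (((continuous_const.mul
        ((hcont.comp (continuous_add_right _)).sub hcont)) :
        Continuous (g n)).aestronglyMeasurable).restrict
    · exact integrableOn_const (by simp [hab])
    · intro n
      filter_upwards with x
      exact (Real.norm_eq_abs _ ▸ hbound n x)
    · have hdiff : ∀ᵐ x : ℝ, DifferentiableAt ℝ f x := hf.ae_differentiableAt
      have hmem : ∀ᵐ x ∂(volume.restrict (Set.Ioc a b)), x ∈ Set.Ioc a b :=
        ae_restrict_mem measurableSet_Ioc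
      have hb : ∀ᵐ x ∂(volume.restrict (Set.Ioc a b)), x ≠ b :=
        ae_restrict_of_ae (by simpa using (Set.countable_singleton b).ae_notMem volume)
      filter_upwards [hmem, hb, ae_restrict_of_ae hdiff, ae_restrict_of_ae hd]
        with x hx hxb hxdiff hxd
      have hxIoo : x ∈ Set.Ioo a b := ⟨hx.1, lt_of_le_of_ne hx.2 hxb⟩
      have := tendsto_quot hxdiff.hasDerivAt
      rw [hxd hxIoo] at this
      exact this
  exact sub_eq_zero.1 (tendsto_nhds_unique hlim1 hlim2)

/-- If `y` is nondecreasing and the Lagrangian energy identity holds, then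
`y(ξ₁) = y(ξ₂)` with `ξ₁ < ξ₂` forces `U(ξ₁) = U(ξ₂)`: the Eulerian velocity
is well defined. -/
theorem eulerian_velocity_well_defined
    (y U H r : ℝ → ℝ)
    (Ly LU LH : NNReal)
    (hylip : LipschitzWith Ly y)
    (hUlip : LipschitzWith LU U) (hHlip : LipschitzWith LH H)
    (hrmeas : Measurable r)
    (hymono : Monotone y)
    (henergy : ∀ᵐ ξ : ℝ,
      deriv y ξ * deriv H ξ =
        (deriv y ξ)^2 * (U ξ)^2 + (deriv U ξ)^2 + (r ξ)^2)
    (ξ₁ ξ₂ : ℝ) (hlt : ξ₁ < ξ₂) (hyeq : y ξ₁ = y ξ₂) :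
    U ξ₁ = U ξ₂ := by
  -- y is constant on [ξ₁, ξ₂]
  have hyconst : ∀ x ∈ Set.Icc ξ₁ ξ₂, y x = y ξ₁ := by
    intro x hx
    exact le_antisymm (hyeq ▸ hymono hx.2) (hymono hx.1)
  -- so deriv y vanishes on the open interval
  have hderivy : ∀ ξ ∈ Set.Ioo ξ₁ ξ₂, deriv y ξ = 0 := by
    intro ξ hξ
    have hev : y =ᶠ[nhds ξ] fun _ => y ξ₁ := by
      filter_upwards [isOpen_Ioo.mem_nhds hξ] with x hx
      exact hyconst x (Set.Ioo_subset_Icc_self hx)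
    rw [hev.deriv_eq]
    exact deriv_const ξ (y ξ₁)
  -- hence deriv U = 0 a.e. on the open interval
  have hdU : ∀ᵐ ξ : ℝ, ξ ∈ Set.Ioo ξ₁ ξ₂ → deriv U ξ = 0 := by
    filter_upwards [henergy] with ξ hξ hmem
    have h0 : deriv y ξ = 0 := hderivy ξ hmem
    rw [h0] at hξ
    simp only [zero_mul, ne_eq, OfNat.ofNat_ne_zero, not_false_eq_true, zero_pow] at hξ
    have h1 : (deriv U ξ)^2 + (r ξ)^2 = 0 := by linarith
    have h2 : (deriv U ξ)^2 = 0 := by nlinarith [sq_nonneg (deriv U ξ), sq_nonneg (r ξ)]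
    exact pow_eq_zero_iff (n := 2) (by norm_num) |>.1 h2
  exact (lipschitz_eq_of_deriv_ae_zero hUlip hlt.le hdU).symm
end

section
/- Let X_α, X_β be tuples of Lipschitz functions (y, U, H) with y + H = id, 0 ≤ y_ξ ≤ 1, 0 ≤ H_ξ ≤ 1, |U_ξ| ≤ 1 a.e. (so each component of X_α has a.e. derivative bounded by 1, giving ‖X_{α,ξ}‖_{L^∞} ≤ 3). Then for any homeomorphism f of ℝ, ‖X_α − X_β‖_{L^∞} ≤ 4‖X_α∘f − X_β‖_{L^∞}, where ‖X‖_{L^∞} = ‖y − id‖_{L^∞} + ‖U‖_{L^∞} + ‖H‖_{L^∞}. -/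
open scoped ENNReal NNReal

/-- If `X_α`, `X_β` are tuples of `1`-Lipschitz functions `(y,U,H)` with
`y + H = id`, then for any homeomorphism `f` of `ℝ`,
`‖X_α - X_β‖_{L^∞} ≤ 4 ‖X_α∘f - X_β‖_{L^∞}`, where
`‖X‖_{L^∞} = ‖y - id‖_∞ + ‖U‖_∞ + ‖H‖_∞`. -/
theorem Linf_compare_relabeled
    (yα Uα Hα yβ Uβ Hβ : ℝ → ℝ)
    (hyαlip : LipschitzWith 1 yα) (hUαlip : LipschitzWith 1 Uα)
    (hHαlip : LipschitzWith 1 Hα)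
    (hyβlip : LipschitzWith 1 yβ) (hUβlip : LipschitzWith 1 Uβ)
    (hHβlip : LipschitzWith 1 Hβ)
    (hα : ∀ ξ, yα ξ + Hα ξ = ξ)
    (hβ : ∀ ξ, yβ ξ + Hβ ξ = ξ)
    (f : Homeomorph ℝ ℝ) :
    (⨆ ξ : ℝ, (‖yα ξ - yβ ξ‖₊ : ℝ≥0∞)) +
        (⨆ ξ : ℝ, (‖Uα ξ - Uβ ξ‖₊ : ℝ≥0∞)) +
        (⨆ ξ : ℝ, (‖Hα ξ - Hβ ξ‖₊ : ℝ≥0∞)) ≤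
      4 * ((⨆ ξ : ℝ, (‖yα (f ξ) - yβ ξ‖₊ : ℝ≥0∞)) +
        (⨆ ξ : ℝ, (‖Uα (f ξ) - Uβ ξ‖₊ : ℝ≥0∞)) +
        (⨆ ξ : ℝ, (‖Hα (f ξ) - Hβ ξ‖₊ : ℝ≥0∞))) := by
  set Sy := ⨆ ξ : ℝ, (‖yα (f ξ) - yβ ξ‖₊ : ℝ≥0∞) with hSydef
  set SU := ⨆ ξ : ℝ, (‖Uα (f ξ) - Uβ ξ‖₊ : ℝ≥0∞) with hSUdef
  set SH := ⨆ ξ : ℝ, (‖Hα (f ξ) - Hβ ξ‖₊ : ℝ≥0∞) with hSHdef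
  have hySup : ∀ ξ : ℝ, (‖yα (f ξ) - yβ ξ‖₊ : ℝ≥0∞) ≤ Sy := fun ξ =>
    le_iSup (fun ξ : ℝ => (‖yα (f ξ) - yβ ξ‖₊ : ℝ≥0∞)) ξ
  have hUSup : ∀ ξ : ℝ, (‖Uα (f ξ) - Uβ ξ‖₊ : ℝ≥0∞) ≤ SU := fun ξ =>
    le_iSup (fun ξ : ℝ => (‖Uα (f ξ) - Uβ ξ‖₊ : ℝ≥0∞)) ξ
  have hHSup : ∀ ξ : ℝ, (‖Hα (f ξ) - Hβ ξ‖₊ : ℝ≥0∞) ≤ SH := fun ξ =>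
    le_iSup (fun ξ : ℝ => (‖Hα (f ξ) - Hβ ξ‖₊ : ℝ≥0∞)) ξ
  -- Lipschitz in nnnorm form
  have lip : ∀ g : ℝ → ℝ, LipschitzWith 1 g → ∀ a b : ℝ,
      (‖g a - g b‖₊ : ℝ≥0∞) ≤ (‖a - b‖₊ : ℝ≥0∞) := by
    intro g hg a b
    have := hg a b
    simpa only [edist_eq_enorm_sub, enorm_eq_nnnorm, ENNReal.coe_one, one_mul] using this
  -- ‖ξ - f ξ‖ ≤ Sy + SH
  have hfid : ∀ ξ : ℝ, (‖ξ - f ξ‖₊ : ℝ≥0∞) ≤ Sy + SH := by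
    intro ξ
    have h1 : ξ - f ξ = (yβ ξ - yα (f ξ)) + (Hβ ξ - Hα (f ξ)) := by
      have h2 := hα (f ξ); have h3 := hβ ξ; linarith
    calc (‖ξ - f ξ‖₊ : ℝ≥0∞)
        ≤ (‖yβ ξ - yα (f ξ)‖₊ : ℝ≥0∞) + (‖Hβ ξ - Hα (f ξ)‖₊ : ℝ≥0∞) := by
          rw [h1]; exact_mod_cast nnnorm_add_le _ _
      _ = (‖yα (f ξ) - yβ ξ‖₊ : ℝ≥0∞) + (‖Hα (f ξ) - Hβ ξ‖₊ : ℝ≥0∞) := by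
          rw [← nnnorm_neg (yβ ξ - yα (f ξ)), ← nnnorm_neg (Hβ ξ - Hα (f ξ)), neg_sub, neg_sub]
      _ ≤ Sy + SH := add_le_add (hySup ξ) (hHSup ξ)
  have key : ∀ (g h : ℝ → ℝ), LipschitzWith 1 g →
      (∀ ξ : ℝ, (‖g (f ξ) - h ξ‖₊ : ℝ≥0∞) ≤ ⨆ ζ : ℝ, (‖g (f ζ) - h ζ‖₊ : ℝ≥0∞)) →
      ∀ ξ : ℝ, (‖g ξ - h ξ‖₊ : ℝ≥0∞) ≤ (Sy + SH) + ⨆ ζ : ℝ, (‖g (f ζ) - h ζ‖₊ : ℝ≥0∞) := by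
    intro g h hg hsup ξ
    calc (‖g ξ - h ξ‖₊ : ℝ≥0∞)
        ≤ (‖g ξ - g (f ξ)‖₊ : ℝ≥0∞) + (‖g (f ξ) - h ξ‖₊ : ℝ≥0∞) := by
          have : g ξ - h ξ = (g ξ - g (f ξ)) + (g (f ξ) - h ξ) := by ring
          rw [this]; exact_mod_cast nnnorm_add_le _ _
      _ ≤ (‖ξ - f ξ‖₊ : ℝ≥0∞) + (‖g (f ξ) - h ξ‖₊ : ℝ≥0∞) :=
          add_le_add_left (lip g hg ξ (f ξ)) _
      _ ≤ (Sy + SH) + ⨆ ζ : ℝ, (‖g (f ζ) - h ζ‖₊ : ℝ≥0∞) :=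
          add_le_add (hfid ξ) (hsup ξ)
  have hy : (⨆ ξ : ℝ, (‖yα ξ - yβ ξ‖₊ : ℝ≥0∞)) ≤ (Sy + SH) + Sy :=
    iSup_le (key yα yβ hyαlip hySup)
  have hU : (⨆ ξ : ℝ, (‖Uα ξ - Uβ ξ‖₊ : ℝ≥0∞)) ≤ (Sy + SH) + SU :=
    iSup_le (key Uα Uβ hUαlip hUSup)
  have hH : (⨆ ξ : ℝ, (‖Hα ξ - Hβ ξ‖₊ : ℝ≥0∞)) ≤ (Sy + SH) + SH :=
    iSup_le (key Hα Hβ hHαlip hHSup)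
  calc (⨆ ξ : ℝ, (‖yα ξ - yβ ξ‖₊ : ℝ≥0∞)) + (⨆ ξ : ℝ, (‖Uα ξ - Uβ ξ‖₊ : ℝ≥0∞)) +
        (⨆ ξ : ℝ, (‖Hα ξ - Hβ ξ‖₊ : ℝ≥0∞))
      ≤ ((Sy + SH) + Sy) + ((Sy + SH) + SU) + ((Sy + SH) + SH) :=
        add_le_add (add_le_add hy hU) hH
    _ = 4 * Sy + 1 * SU + 4 * SH := by ring
    _ ≤ 4 * Sy + 4 * SU + 4 * SH := by
        gcongr
        norm_num
    _ = 4 * (Sy + SU + SH) := by ring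
end

section
/- Let f be an increasing homeomorphism of ℝ with ‖f − id‖_{L^∞} ≤ 1, and let r ∈ L²(ℝ). Then ‖∫_{−∞}^ξ (r∘f)(η) f_ξ(η) (e^{−|f(η)|} − e^{−|η|}) dη‖_{L^∞(dξ)} ≤ e·√2·‖r‖_{L²}·‖f − id‖_{L^∞}. -/
open MeasureTheory
open scoped ENNReal

lemma abs_one_sub_exp_le {t : ℝ} (ht : |t| ≤ 1) : |1 - Real.exp t| ≤ Real.exp 1 * |t| := by
  have he1 : (1:ℝ) ≤ Real.exp 1 := by
    have := Real.add_one_le_exp (1:ℝ); linarith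
  rcases le_or_gt 0 t with h | h
  · have h1 : Real.exp t ≤ Real.exp 1 := Real.exp_le_exp.2 ((le_abs_self t).trans ht)
    have h2 : (-t) + 1 ≤ Real.exp (-t) := Real.add_one_le_exp (-t)
    have h3 : Real.exp t * Real.exp (-t) = 1 := by
      rw [← Real.exp_add]; simp
    have h4 : (0:ℝ) < Real.exp t := Real.exp_pos t
    have h5 : (1:ℝ) ≤ Real.exp t := Real.one_le_exp h
    rw [abs_of_nonpos (by linarith), abs_of_nonneg h]
    nlinarith
  · have h2 : t + 1 ≤ Real.exp t := Real.add_one_le_exp t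
    have h4 : (0:ℝ) < Real.exp t := Real.exp_pos t
    have h5 : Real.exp t < 1 := by
      rw [← Real.exp_zero]; exact Real.exp_lt_exp.2 h
    rw [abs_of_neg h]
    rw [abs_of_nonneg (by nlinarith)]
    nlinarith

lemma exp_abs_diff_bound {a b : ℝ} (h : |a - b| ≤ 1) :
    |Real.exp (-a) - Real.exp (-b)| ≤ Real.exp 1 * |a - b| * Real.exp (-a) := by
  have hb : Real.exp (-b) = Real.exp (-a) * Real.exp (a - b) := by
    rw [← Real.exp_add]; ring_nf
  rw [hb, show Real.exp (-a) - Real.exp (-a) * Real.exp (a - b)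
      = Real.exp (-a) * (1 - Real.exp (a - b)) by ring, abs_mul,
    abs_of_pos (Real.exp_pos _)]
  calc Real.exp (-a) * |1 - Real.exp (a - b)|
      ≤ Real.exp (-a) * (Real.exp 1 * |a - b|) :=
        mul_le_mul_of_nonneg_left (abs_one_sub_exp_le h) (Real.exp_pos _).le
    _ = Real.exp 1 * |a - b| * Real.exp (-a) := by ring

/-- For an increasing (bi-Lipschitz) homeomorphism `f` with `‖f - id‖_∞ ≤ 1`
and `r ∈ L²`, the quantity
`∫_{-∞}^ξ (r∘f) f_ξ (e^{-|f(η)|} - e^{-|η|}) dη` is bounded uniformly in `ξ`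
by `e·√2·‖r‖_{L²}·‖f - id‖_∞`. -/
theorem exp_relabeling_estimate
    (f : Homeomorph ℝ ℝ) (hmono : StrictMono f)
    (K : NNReal) (hlip : LipschitzWith K f) (hlipinv : LipschitzWith K f.symm)
    (C : ℝ) (hC : ∀ x, |f x - x| ≤ C) (hC1 : C ≤ 1)
    (r : ℝ → ℝ) (hr : MemLp r 2 (volume : Measure ℝ)) :
    ∀ ξ : ℝ,
      |∫ η in Set.Iio ξ,
          r (f η) * deriv f η * (Real.exp (-|f η|) - Real.exp (-|η|))| ≤
        Real.exp 1 * Real.sqrt 2 * (eLpNorm r 2 (volume : Measure ℝ)).toReal * C := by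
  intro ξ
  have hC0 : 0 ≤ C := le_trans (abs_nonneg _) (hC 0)
  -- the weight function and the comparison function
  set g : ℝ → ℝ := fun y => |r y| * Real.exp (-|y|) with hgdef
  have hcont : Continuous fun x : ℝ => Real.exp (-2 * |x|) := by fun_prop
  -- integrability of exp(-2|x|)
  have hIoi2 : IntegrableOn (fun x : ℝ => Real.exp (-2 * x)) (Set.Ioi (0:ℝ)) :=
    exp_neg_integrableOn_Ioi 0 two_pos
  have hIoi : IntegrableOn (fun x : ℝ => Real.exp (-2 * |x|)) (Set.Ioi (0:ℝ)) :=
    hIoi2.congr_fun (fun x hx => by rw [abs_of_pos hx]) measurableSet_Ioi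
  have hsq : Integrable (fun x : ℝ => Real.exp (-2 * |x|)) (volume : Measure ℝ) := by
    have hIic : IntegrableOn (fun x : ℝ => Real.exp (-2 * |x|)) (Set.Iic (0:ℝ)) := by
      refine Integrable.mono (integrableOn_exp_Iic 0)
        hcont.aestronglyMeasurable.restrict (Filter.Eventually.of_forall fun x => ?_)
      simp only [Real.norm_eq_abs, abs_of_pos (Real.exp_pos _)]
      refine Real.exp_le_exp.2 ?_
      have := neg_abs_le x
      have := abs_nonneg x
      linarith
    have hu := hIic.union hIoi
    rwa [Set.Iic_union_Ioi, integrableOn_univ] at hu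
  -- Memℒp of the exponential weight
  have hwm : AEStronglyMeasurable (fun y : ℝ => Real.exp (-|y|)) (volume : Measure ℝ) := by
    have : Continuous fun y : ℝ => Real.exp (-|y|) := by fun_prop
    exact this.aestronglyMeasurable
  have hw2 : MemLp (fun y : ℝ => Real.exp (-|y|)) 2 (volume : Measure ℝ) := by
    rw [memLp_two_iff_integrable_sq hwm]
    refine hsq.congr (Filter.Eventually.of_forall fun x => ?_)
    show Real.exp (-2 * |x|) = Real.exp (-|x|) ^ 2
    rw [sq, ← Real.exp_add]; ring_nf
  -- integrability of g
  have hgmem : MemLp g 1 (volume : Measure ℝ) := by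
    have h12 : (1 : ℝ≥0∞) / 1 = 1 / 2 + 1 / 2 := by
      simp [one_div, ENNReal.inv_two_add_inv_two]
    haveI : ENNReal.HolderTriple 2 2 1 := ⟨by simp [ENNReal.inv_two_add_inv_two]⟩
    exact MemLp.smul (φ := fun x => ‖r x‖) (f := fun y : ℝ => Real.exp (-|y|))
      hw2 hr.norm
  have hg_int : Integrable g (volume : Measure ℝ) := by
    have hint := memLp_one_iff_integrable.mp hgmem
    refine hint.congr (Filter.Eventually.of_forall fun x => ?_)
    show ‖r x‖ * Real.exp (-|x|) = |r x| * Real.exp (-|x|)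
    rw [Real.norm_eq_abs]
  -- Hölder estimate : ∫ g ≤ ‖r‖₂ * √2
  have hHolder : (∫ a, g a) ≤ (eLpNorm r 2 (volume : Measure ℝ)).toReal * Real.sqrt 2 := by
    have hpq : Real.HolderConjugate 2 2 := Real.holderConjugate_iff.mpr ⟨one_lt_two, by norm_num⟩
    have hr2 : MemLp r (ENNReal.ofReal 2) (volume : Measure ℝ) := by
      rw [ENNReal.ofReal_ofNat]; exact hr
    have hw2' : MemLp (fun y : ℝ => Real.exp (-|y|)) (ENNReal.ofReal 2) (volume : Measure ℝ) := by
      rw [ENNReal.ofReal_ofNat]; exact hw2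
    have hH := integral_mul_norm_le_Lp_mul_Lq (μ := (volume : Measure ℝ)) hpq hr2 hw2'
    have hg_eq : (∫ a, g a) = ∫ a, ‖r a‖ * ‖Real.exp (-|a|)‖ := by
      refine integral_congr_ae (Filter.Eventually.of_forall fun a => ?_)
      simp [g, Real.norm_eq_abs, abs_of_pos (Real.exp_pos _)]
    -- first factor
    have hrnorm : (∫ a, ‖r a‖ ^ (2:ℝ)) ^ (1 / (2:ℝ))
        = (eLpNorm r 2 (volume : Measure ℝ)).toReal := by
      have hsn := hr.eLpNorm_eq_integral_rpow_norm two_ne_zero ENNReal.ofNat_ne_top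
      rw [ENNReal.toReal_ofNat] at hsn
      rw [hsn, ENNReal.toReal_ofReal, one_div]
      exact Real.rpow_nonneg (integral_nonneg fun a => Real.rpow_nonneg (norm_nonneg _) _) _
    -- second factor
    have hwval : (∫ a, ‖Real.exp (-|a|)‖ ^ (2:ℝ)) ≤ 2 := by
      have h1 : (∫ a, ‖Real.exp (-|a|)‖ ^ (2:ℝ)) = ∫ a : ℝ, Real.exp (-2 * |a|) := by
        refine integral_congr_ae (Filter.Eventually.of_forall fun a => ?_)
        show ‖Real.exp (-|a|)‖ ^ (2:ℝ) = Real.exp (-2 * |a|)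
        rw [Real.norm_of_nonneg (Real.exp_pos _).le, ← Real.exp_mul]
        ring_nf
      have h2 : (∫ a : ℝ, Real.exp (-2 * |a|))
          = 2 * ∫ x in Set.Ioi (0:ℝ), Real.exp (-2 * x) :=
        integral_comp_abs (f := fun x => Real.exp (-2 * x))
      have hexp1 : IntegrableOn (fun x : ℝ => Real.exp (-x)) (Set.Ioi (0:ℝ)) :=
        (exp_neg_integrableOn_Ioi 0 one_pos).congr_fun
          (fun x _ => by norm_num) measurableSet_Ioi
      have h3 : (∫ x in Set.Ioi (0:ℝ), Real.exp (-2 * x))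
          ≤ ∫ x in Set.Ioi (0:ℝ), Real.exp (-x) := by
        refine setIntegral_mono_on hIoi2 hexp1 measurableSet_Ioi fun x hx => ?_
        have hx0 : (0:ℝ) < x := hx
        exact Real.exp_le_exp.2 (by linarith)
      have h4 : (∫ x in Set.Ioi (0:ℝ), Real.exp (-x)) = 1 := integral_exp_neg_Ioi_zero
      rw [h1, h2]
      rw [h4] at h3
      linarith
    have hwfac : (∫ a, ‖Real.exp (-|a|)‖ ^ (2:ℝ)) ^ (1 / (2:ℝ)) ≤ Real.sqrt 2 := by
      rw [Real.sqrt_eq_rpow]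
      exact Real.rpow_le_rpow
        (integral_nonneg fun a => Real.rpow_nonneg (norm_nonneg _) _) hwval (by norm_num)
    calc (∫ a, g a) = ∫ a, ‖r a‖ * ‖Real.exp (-|a|)‖ := hg_eq
      _ ≤ (∫ a, ‖r a‖ ^ (2:ℝ)) ^ (1 / (2:ℝ)) * (∫ a, ‖Real.exp (-|a|)‖ ^ (2:ℝ)) ^ (1 / (2:ℝ)) := hH
      _ ≤ (eLpNorm r 2 (volume : Measure ℝ)).toReal * Real.sqrt 2 := by
          rw [hrnorm]
          exact mul_le_mul_of_nonneg_left hwfac ENNReal.toReal_nonneg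
  -- the differentiability set
  set D := {x : ℝ | DifferentiableAt ℝ (⇑f) x} with hDdef
  have hDm : MeasurableSet D := measurableSet_of_differentiableAt ℝ (⇑f)
  have hDc : volume Dᶜ = 0 := by
    have hae : ∀ᵐ x ∂(volume : Measure ℝ), DifferentiableAt ℝ (⇑f) x :=
      hlip.ae_differentiableAt
    exact ae_iff.mp hae
  set s := Set.Iio ξ ∩ D with hsdef
  have hsm : MeasurableSet s := measurableSet_Iio.inter hDm
  have hseq : s =ᵐ[(volume : Measure ℝ)] Set.Iio ξ := by
    refine (MeasureTheory.ae_eq_set).2 ⟨?_, ?_⟩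
    · rw [Set.diff_eq_empty.2 Set.inter_subset_left]; simp
    · refine measure_mono_null (fun x hx => ?_) hDc
      intro hxD
      exact hx.2 ⟨hx.1, hxD⟩
  have hf' : ∀ x ∈ s, HasDerivWithinAt (⇑f) (deriv (⇑f) x) s x :=
    fun x hx => (hx.2.hasDerivAt).hasDerivWithinAt
  have hinj : Set.InjOn (⇑f) s := hmono.injective.injOn
  have himg : (∫ x in (⇑f) '' s, g x) = ∫ x in s, |deriv (⇑f) x| • g (f x) :=
    integral_image_eq_integral_abs_deriv_smul hsm hf' hinj g
  -- integrability of the comparison function on s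
  have hGs : IntegrableOn (fun x => |deriv (⇑f) x| • g (f x)) s (volume : Measure ℝ) :=
    (integrableOn_image_iff_integrableOn_abs_deriv_smul hsm hf' hinj g).1
      hg_int.integrableOn
  have hGs' : Integrable (fun x => (Real.exp 1 * C) * (|deriv (⇑f) x| * g (f x)))
      ((volume : Measure ℝ).restrict s) := by
    have := hGs.const_mul (Real.exp 1 * C)
    simpa [smul_eq_mul] using this
  -- pointwise bound
  have hbound : ∀ x : ℝ,
      |r (f x) * deriv (⇑f) x * (Real.exp (-|f x|) - Real.exp (-|x|))|
        ≤ (Real.exp 1 * C) * (|deriv (⇑f) x| * g (f x)) := by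
    intro x
    have h1 : |abs (f x) - abs x| ≤ C := le_trans (abs_abs_sub_abs_le_abs_sub _ _) (hC x)
    have h2 := exp_abs_diff_bound (a := abs (f x)) (b := abs x) (le_trans h1 hC1)
    have h3 : |Real.exp (-|f x|) - Real.exp (-|x|)|
        ≤ Real.exp 1 * C * Real.exp (-|f x|) := by
      refine h2.trans ?_
      exact mul_le_mul_of_nonneg_right
        (mul_le_mul_of_nonneg_left h1 (Real.exp_pos 1).le) (Real.exp_pos _).le
    calc |r (f x) * deriv (⇑f) x * (Real.exp (-|f x|) - Real.exp (-|x|))|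
        = |r (f x)| * |deriv (⇑f) x| * |Real.exp (-|f x|) - Real.exp (-|x|)| := by
          rw [abs_mul, abs_mul]
      _ ≤ |r (f x)| * |deriv (⇑f) x| * (Real.exp 1 * C * Real.exp (-|f x|)) := by
          exact mul_le_mul_of_nonneg_left h3 (by positivity)
      _ = (Real.exp 1 * C) * (|deriv (⇑f) x| * (|r (f x)| * Real.exp (-|f x|))) := by ring
      _ = (Real.exp 1 * C) * (|deriv (⇑f) x| * g (f x)) := rfl
  -- assemble the chain of inequalities
  have step1 : |∫ η in Set.Iio ξ,
      r (f η) * deriv f η * (Real.exp (-|f η|) - Real.exp (-|η|))|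
      ≤ ∫ η in s, |r (f η) * deriv f η * (Real.exp (-|f η|) - Real.exp (-|η|))| := by
    rw [← setIntegral_congr_set hseq]
    have hni := norm_integral_le_integral_norm (μ := (volume : Measure ℝ).restrict s)
      (f := fun η => r (f η) * deriv (⇑f) η * (Real.exp (-|f η|) - Real.exp (-|η|)))
    simpa only [Real.norm_eq_abs] using hni
  have step2 : (∫ η in s, |r (f η) * deriv f η * (Real.exp (-|f η|) - Real.exp (-|η|))|)
      ≤ ∫ η in s, (Real.exp 1 * C) * (|deriv (⇑f) η| * g (f η)) := by
    refine integral_mono_of_nonneg (Filter.Eventually.of_forall fun x => abs_nonneg _)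
      hGs' (Filter.Eventually.of_forall fun x => hbound x)
  have step3 : (∫ η in s, (Real.exp 1 * C) * (|deriv (⇑f) η| * g (f η)))
      = (Real.exp 1 * C) * ∫ η in s, |deriv (⇑f) η| * g (f η) :=
    integral_const_mul _ _
  have step4 : (∫ η in s, |deriv (⇑f) η| * g (f η)) = ∫ x in (⇑f) '' s, g x := by
    rw [himg]; simp [smul_eq_mul]
  have step5 : (∫ x in (⇑f) '' s, g x) ≤ ∫ x, g x :=
    setIntegral_le_integral hg_int
      (Filter.Eventually.of_forall fun x => by positivity)
  have hfin : |∫ η in Set.Iio ξ,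
      r (f η) * deriv f η * (Real.exp (-|f η|) - Real.exp (-|η|))|
      ≤ (Real.exp 1 * C) * ((eLpNorm r 2 (volume : Measure ℝ)).toReal * Real.sqrt 2) := by
    refine le_trans step1 (le_trans step2 ?_)
    rw [step3, step4]
    have h5 := step5.trans hHolder
    have hec : (0:ℝ) ≤ Real.exp 1 * C := by positivity
    exact mul_le_mul_of_nonneg_left h5 hec
  calc |∫ η in Set.Iio ξ,
      r (f η) * deriv f η * (Real.exp (-|f η|) - Real.exp (-|η|))|
      ≤ (Real.exp 1 * C) * ((eLpNorm r 2 (volume : Measure ℝ)).toReal * Real.sqrt 2) := hfin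
    _ = Real.exp 1 * Real.sqrt 2 * (eLpNorm r 2 (volume : Measure ℝ)).toReal * C := by ring
end

section
/- Let μ be a finite positive Radon measure on ℝ and define y(ξ) = sup{x : μ((−∞,x)) + x < ξ} and H(ξ) = ξ − y(ξ). Then y is nondecreasing and Lipschitz with Lipschitz constant 1, H is nondecreasing with 0 ≤ H(ξ) ≤ μ(ℝ), lim_{ξ→−∞} H(ξ) = 0, and y + H = id. -/
open MeasureTheory Filter

/-- For a finite positive Radon measure `μ` on `ℝ`, the generalized inverse
`y(ξ) = sup{x : μ((-∞,x)) + x < ξ}` is nondecreasing and `1`-Lipschitz, and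
`H = id - y` is nondecreasing with `0 ≤ H ≤ μ(ℝ)`, `H → 0` at `-∞`, and
`y + H = id`. -/
theorem lagrangian_from_measure
    (μ : Measure ℝ) [IsFiniteMeasure μ]
    (y H : ℝ → ℝ)
    (hy : y = fun ξ => sSup {x : ℝ | (μ (Set.Iio x)).toReal + x < ξ})
    (hH : H = fun ξ => ξ - y ξ) :
    Monotone y ∧ LipschitzWith 1 y ∧ Monotone H ∧
    (∀ ξ, 0 ≤ H ξ ∧ H ξ ≤ (μ Set.univ).toReal) ∧
    Tendsto H atBot (nhds 0) ∧
    ∀ ξ, y ξ + H ξ = ξ := by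
  set M : ℝ := (μ Set.univ).toReal with hM
  set S : ℝ → Set ℝ := fun ξ => {x : ℝ | (μ (Set.Iio x)).toReal + x < ξ} with hS
  have hle : ∀ a b : ℝ, a ≤ b → (μ (Set.Iio a)).toReal ≤ (μ (Set.Iio b)).toReal := by
    intro a b hab
    exact ENNReal.toReal_mono (measure_ne_top μ _) (measure_mono (Set.Iio_subset_Iio hab))
  have hleM : ∀ a : ℝ, (μ (Set.Iio a)).toReal ≤ M := fun a =>
    ENNReal.toReal_mono (measure_ne_top μ _) (measure_mono (Set.subset_univ _))
  have hM0 : 0 ≤ M := ENNReal.toReal_nonneg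
  have hne : ∀ ξ : ℝ, (S ξ).Nonempty := by
    intro ξ
    refine ⟨ξ - M - 1, ?_⟩
    have := hleM (ξ - M - 1)
    simp only [hS, Set.mem_setOf_eq]
    linarith
  have hbdd : ∀ ξ : ℝ, BddAbove (S ξ) := by
    intro ξ
    refine ⟨ξ, fun x hx => ?_⟩
    simp only [hS, Set.mem_setOf_eq] at hx
    have : (0:ℝ) ≤ (μ (Set.Iio x)).toReal := ENNReal.toReal_nonneg
    linarith
  have hyS : ∀ ξ, y ξ = sSup (S ξ) := by intro ξ; rw [hy]
  -- y ξ ≤ ξ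
  have hyle : ∀ ξ, y ξ ≤ ξ := by
    intro ξ
    rw [hyS]
    refine csSup_le (hne ξ) fun x hx => ?_
    simp only [hS, Set.mem_setOf_eq] at hx
    have : (0:ℝ) ≤ (μ (Set.Iio x)).toReal := ENNReal.toReal_nonneg
    linarith
  -- lower bound : ξ - M ≤ y ξ
  have hyge : ∀ ξ, ξ - M ≤ y ξ := by
    intro ξ
    rw [hyS]
    refine le_of_forall_lt fun c hc => ?_
    obtain ⟨z, hz1, hz2⟩ := exists_between hc
    have hm : z ∈ S ξ := by
      simp only [hS, Set.mem_setOf_eq]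
      have := hleM z
      linarith
    exact lt_of_lt_of_le hz1 (le_csSup (hbdd ξ) hm)
  -- Lipschitz one-sided estimate
  have hlip : ∀ ξ₁ ξ₂ : ℝ, ξ₁ ≤ ξ₂ → y ξ₂ ≤ y ξ₁ + (ξ₂ - ξ₁) := by
    intro ξ₁ ξ₂ h12
    rw [hyS, hyS]
    refine csSup_le (hne ξ₂) fun x hx => ?_
    simp only [hS, Set.mem_setOf_eq] at hx
    have hmem : x - (ξ₂ - ξ₁) ∈ S ξ₁ := by
      simp only [hS, Set.mem_setOf_eq]
      have := hle (x - (ξ₂ - ξ₁)) x (by linarith)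
      linarith
    have := le_csSup (hbdd ξ₁) hmem
    linarith
  have hmono : Monotone y := by
    intro a b hab
    rw [hyS, hyS]
    refine csSup_le_csSup (hbdd b) (hne a) fun x hx => ?_
    simp only [hS, Set.mem_setOf_eq] at hx ⊢
    linarith
  have hlipW : LipschitzWith 1 y := by
    refine LipschitzWith.of_dist_le_mul fun a b => ?_
    rw [NNReal.coe_one, one_mul, Real.dist_eq, Real.dist_eq]
    rcases le_total a b with h | h
    · have h1 := hlip a b h
      have h2 := hmono h
      have habs : b - a ≤ |a - b| := by rw [abs_sub_comm]; exact le_abs_self _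
      have habs0 : (0:ℝ) ≤ |a - b| := abs_nonneg _
      rw [abs_sub_le_iff]
      exact ⟨by linarith, by linarith⟩
    · have h1 := hlip b a h
      have h2 := hmono h
      have habs : a - b ≤ |a - b| := le_abs_self _
      have habs0 : (0:ℝ) ≤ |a - b| := abs_nonneg _
      rw [abs_sub_le_iff]
      exact ⟨by linarith, by linarith⟩
  have hHmono : Monotone H := by
    intro a b hab
    rw [hH]
    have := hlip a b hab
    simp only
    linarith
  have hHbounds : ∀ ξ, 0 ≤ H ξ ∧ H ξ ≤ M := by
    intro ξ
    rw [hH]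
    exact ⟨by have := hyle ξ; simp only; linarith,
           by have := hyge ξ; simp only; linarith⟩
  -- key estimate for tendsto: H ξ ≤ μ(Iio (y ξ + ε)).toReal + ε
  have hkey : ∀ ξ ε : ℝ, 0 < ε → H ξ ≤ (μ (Set.Iio (y ξ + ε))).toReal + ε := by
    intro ξ ε hε
    have hnot : y ξ + ε ∉ S ξ := by
      intro hmem
      have := le_csSup (hbdd ξ) hmem
      rw [hyS] at this
      linarith
    simp only [hS, Set.mem_setOf_eq, not_lt] at hnot
    rw [hH]
    simp only
    linarith
  -- μ(Iio t).toReal → 0 as t → -∞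
  have hmeas0 : Tendsto (fun t : ℝ => (μ (Set.Iio t)).toReal) atBot (nhds 0) := by
    have h1 : Tendsto (fun t : ℝ => μ (Set.Iio t)) atBot (nhds (μ (⋂ t : ℝ, Set.Iio t))) := by
      exact tendsto_measure_iInter_atBot
        (fun t => (measurableSet_Iio).nullMeasurableSet)
        (fun a b hab => Set.Iio_subset_Iio hab) ⟨0, measure_ne_top μ _⟩
    have hI : (⋂ t : ℝ, Set.Iio t) = ∅ := by
      ext x
      simp only [Set.mem_iInter, Set.mem_Iio, Set.mem_empty_iff_false, iff_false, not_forall,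
        not_lt]
      exact ⟨x, le_refl x⟩
    rw [hI, measure_empty] at h1
    have := (ENNReal.tendsto_toReal (by simp : (0:ENNReal) ≠ ⊤)).comp h1
    simpa [Function.comp_def] using this
  have hHtendsto : Tendsto H atBot (nhds 0) := by
    rw [Metric.tendsto_nhds]
    intro ε hε
    rw [Metric.tendsto_nhds] at hmeas0
    have h2 : ∀ᶠ t : ℝ in atBot, (μ (Set.Iio t)).toReal < ε / 2 := by
      filter_upwards [hmeas0 (ε/2) (by linarith)] with t ht
      rw [Real.dist_eq, sub_zero, abs_of_nonneg ENNReal.toReal_nonneg] at ht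
      exact ht
    have h3 : Tendsto (fun ξ : ℝ => ξ + ε / 2) atBot atBot :=
      tendsto_atBot_add_const_right _ _ tendsto_id
    filter_upwards [h3.eventually h2] with ξ hξ
    have hk := hkey ξ (ε/2) (by linarith)
    have hmono2 : (μ (Set.Iio (y ξ + ε/2))).toReal ≤ (μ (Set.Iio (ξ + ε/2))).toReal :=
      hle _ _ (by have := hyle ξ; linarith)
    have h0 := (hHbounds ξ).1
    rw [Real.dist_eq, sub_zero, abs_of_nonneg h0]
    calc H ξ ≤ (μ (Set.Iio (y ξ + ε/2))).toReal + ε/2 := hk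
      _ ≤ (μ (Set.Iio (ξ + ε/2))).toReal + ε/2 := by linarith
      _ < ε/2 + ε/2 := by linarith
      _ = ε := by ring
  refine ⟨hmono, hlipW, hHmono, hHbounds, hHtendsto, fun ξ => ?_⟩
  rw [hH]; ring
end
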